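/- Let G ∈ 𝔾 and let S be a structural set of G. Then σ(G)∖N(G;S) = σ(R_S(G))∖N(G;S); that is, the spectrum of G and the spectrum of its isospectral reduction R_S(G) differ at most by the set N(G;S). -/

import Mathlib

open scoped Classical

noncomputable section

/-- A finite weighted digraph with weights in the field `𝕎 = RatFunc ℂ` of complex
rational functions: a finite vertex set together with a weight function, where
weight `0` encodes the absence of an edge (no parallel edges, loops allowed). -/
structure WDigraph (V : Type*) [Fintype V] [DecidableEq V] where
  verts : Finset V
  w : V → V → RatFunc ℂ

namespace WDigraph

variable {V : Type*} [Fintype V] [DecidableEq V]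

/-- Membership in `𝔾`: all edges (nonzero weights) join vertices of `G`. -/
def Wf (G : WDigraph V) : Prop :=
  ∀ u v, G.w u v ≠ 0 → u ∈ G.verts ∧ v ∈ G.verts

/-- `det (M(G) - λ I)` as an element of `𝕎`. -/
def charDet (G : WDigraph V) : RatFunc ℂ :=
  Matrix.det (Matrix.of fun i j : G.verts =>
    G.w i.1 j.1 - if i = j then (RatFunc.X : RatFunc ℂ) else 0)

/-- The spectrum of `G`: the list (multiset) of complex solutions, with
multiplicity, of `det (M(G,λ) - λ I) = 0`. -/
def spec (G : WDigraph V) : Multiset ℂ := G.charDet.num.roots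

/-- Membership in `𝔾_π`: every adjacency matrix entry `p/q` has `π(p/q) = deg p - deg q ≤ 0`. -/
def PiNonpos (G : WDigraph V) : Prop :=
  ∀ u v, (G.w u v).num.degree ≤ (G.w u v).denom.degree

end WDigraph

/-- Two spectra (lists) differ at most by the set `N`: after removing all entries
with values in `N` they agree. -/
def SpecDiffAtMost (s₁ s₂ : Multiset ℂ) (N : Set ℂ) : Prop :=
  s₁.filter (fun z => z ∉ N) = s₂.filter (fun z => z ∉ N)

variable {V : Type*} [Fintype V] [DecidableEq V]

/-- `S` is a structural set of `G`: `S` is a nonempty subset of the vertices, the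
complement of `S` induces no cycles in `ℓ(G)` (i.e. no closed walk through
consecutive-distinct vertices all lying outside `S`), and no loop at a vertex
outside `S` has weight `λ`. -/
def IsStructuralSet (G : WDigraph V) (S : Finset V) : Prop :=
  S.Nonempty ∧ S ⊆ G.verts ∧
    (∀ v, ¬ Relation.TransGen
      (fun a b => a ∈ G.verts ∧ b ∈ G.verts ∧ a ∉ S ∧ b ∉ S ∧ a ≠ b ∧ G.w a b ≠ 0) v v) ∧
    ∀ v ∈ G.verts, v ∉ S → G.w v v ≠ RatFunc.X

/-- `β` is a branch of `G` from `u` to `v` with respect to `S`: a path or cycle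
from `u` to `v` in `G` all of whose interior vertices lie outside `S`. -/
def IsBranch (G : WDigraph V) (S : Finset V) (u v : V) (β : List V) : Prop :=
  u ∈ S ∧ v ∈ S ∧
    ∃ int : List V, β = u :: (int ++ [v]) ∧
      (∀ x ∈ int, x ∈ G.verts ∧ x ∉ S) ∧
      (u :: int).Nodup ∧ v ∉ int ∧
      List.Chain' (fun a b => G.w a b ≠ 0) β

/-- The branch product `𝒫_ω(β)` of a branch `β = v₁, …, v_m`. -/
def branchProd {V : Type*} (w : V → V → RatFunc ℂ) : List V → RatFunc ℂ
  | [] => 0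
  | [_] => 0
  | [a, b] => w a b
  | a :: b :: c :: rest => w a b * branchProd w (b :: c :: rest) / (RatFunc.X - w b b)

/-- The isospectral reduction `R_S(G)`: the graph on vertex set `S` whose weight
from `u` to `v` is the sum of the branch products of all branches from `u` to
`v` with respect to `S`. -/
def WDigraph.reduce (G : WDigraph V) (S : Finset V) : WDigraph V where
  verts := S
  w := fun u v => ∑ᶠ β ∈ {β : List V | IsBranch G S u v β}, branchProd G.w β

/-- The set `N(G;S)`: all `z ∈ ℂ` such that for some vertex `v` of `G` off `S`,
either `z = ω(e_vv)(z)` or `ω(e_vv)` is undefined at `z`. -/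
def NSet (G : WDigraph V) (S : Finset V) : Set ℂ :=
  {z | ∃ v ∈ G.verts, v ∉ S ∧
    ((RatFunc.X - G.w v v).num.eval z = 0 ∨ (G.w v v).denom.eval z = 0)}

/-- Isomorphism of weighted digraphs: a vertex bijection carrying edges to edges
and preserving weights. -/
def WDigraph.Isom {V₁ : Type*} [Fintype V₁] [DecidableEq V₁]
    {V₂ : Type*} [Fintype V₂] [DecidableEq V₂]
    (G : WDigraph V₁) (H : WDigraph V₂) : Prop :=
  ∃ ρ : G.verts ≃ H.verts, ∀ u v : G.verts, H.w (ρ u).1 (ρ v).1 = G.w u.1 v.1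




namespace IsoRedProof

open Matrix Finset

variable {V : Type*} [Fintype V] [DecidableEq V]

abbrev W := RatFunc ℂ

variable (G : WDigraph V) (S : Finset V)

/-- The edge relation of `ℓ(G)` restricted off `S`. -/
def r' (a b : V) : Prop :=
  a ∈ G.verts ∧ b ∈ G.verts ∧ a ∉ S ∧ b ∉ S ∧ a ≠ b ∧ G.w a b ≠ 0

/-- A "height" function compatible with the acyclic relation `r'`. -/
def bval (v : V) : ℕ :=
  ((G.verts \ S).filter (fun u => Relation.ReflTransGen (r' G S) u v)).card

variable {G S}

lemma bval_lt (hcyc : ∀ v, ¬ Relation.TransGen (r' G S) v v)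
    {a b : V} (h : r' G S a b) : bval G S a < bval G S b := by
  apply Finset.card_lt_card
  constructor
  · intro u hu
    rcases Finset.mem_filter.1 hu with ⟨hu1, hu2⟩
    exact Finset.mem_filter.2 ⟨hu1, hu2.tail h⟩
  · intro hsub
    have hb : b ∈ (G.verts \ S).filter (fun u => Relation.ReflTransGen (r' G S) u b) :=
      Finset.mem_filter.2 ⟨Finset.mem_sdiff.2 ⟨h.2.1, h.2.2.2.1⟩, Relation.ReflTransGen.refl⟩
    have hba := (Finset.mem_filter.1 (hsub hb)).2
    exact hcyc b (Relation.TransGen.trans_right hba (Relation.TransGen.single h))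

lemma bval_le (v : V) : bval G S v ≤ (G.verts \ S).card := Finset.card_filter_le _ _

lemma one_le_bval {v : V} (hv : v ∈ G.verts \ S) : 1 ≤ bval G S v :=
  Finset.card_pos.2 ⟨v, Finset.mem_filter.2 ⟨hv, Relation.ReflTransGen.refl⟩⟩

variable (G S)

abbrev Vs := {x : V // x ∈ S}
abbrev Vb := {x : V // x ∈ G.verts \ S}

def matA : Matrix (Vs (V := V) S) (Vs (V := V) S) W :=
  Matrix.of fun i j => G.w i.1 j.1 - if i.1 = j.1 then RatFunc.X else 0

def matB : Matrix (Vs (V := V) S) (Vb G S) W := Matrix.of fun i v => G.w i.1 v.1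

def matC : Matrix (Vb G S) (Vs (V := V) S) W := Matrix.of fun v j => G.w v.1 j.1

def matD : Matrix (Vb G S) (Vb G S) W :=
  Matrix.of fun u v => G.w u.1 v.1 - if u.1 = v.1 then RatFunc.X else 0

def matE : Matrix (Vb G S) (Vb G S) W :=
  Matrix.of fun u v => if u.1 = v.1 then 0 else G.w u.1 v.1

def lamf (v : Vb G S) : W := RatFunc.X - G.w v.1 v.1

def Lam : Matrix (Vb G S) (Vb G S) W := Matrix.diagonal (lamf G S)

def Lami : Matrix (Vb G S) (Vb G S) W := Matrix.diagonal (fun v => (lamf G S v)⁻¹)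

def matN : Matrix (Vb G S) (Vb G S) W :=
  Matrix.of fun a b => if a.1 = b.1 then 0 else (lamf G S a)⁻¹ * G.w a.1 b.1

variable {G S}

lemma lamf_ne (hS : IsStructuralSet G S) (v : Vb G S) : lamf G S v ≠ 0 := by
  have hv := Finset.mem_sdiff.1 v.2
  have := hS.2.2.2 v.1 hv.1 hv.2
  exact sub_ne_zero_of_ne (Ne.symm this)

lemma Lam_mul_Lami (hS : IsStructuralSet G S) : Lam G S * Lami G S = 1 := by
  rw [Lam, Lami, Matrix.diagonal_mul_diagonal]
  have : (fun v => lamf G S v * (lamf G S v)⁻¹) = fun _ => (1 : W) := by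
    funext v; exact mul_inv_cancel₀ (lamf_ne hS v)
  rw [this, Matrix.diagonal_one]

lemma Lam_mul_N (hS : IsStructuralSet G S) : Lam G S * matN G S = matE G S := by
  ext a b
  rw [Lam, Matrix.diagonal_mul]
  by_cases h : a.1 = b.1
  · simp [matN, matE, h, Subtype.ext h]
  · simp only [matN, matE, Matrix.of_apply, if_neg h]
    rw [← mul_assoc, mul_inv_cancel₀ (lamf_ne hS a), one_mul]

lemma matD_eq : matD G S = matE G S - Lam G S := by
  ext a b
  by_cases h : a = b
  · subst h
    simp [matD, matE, Lam, lamf, Matrix.diagonal_apply_eq]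
  · have h' : a.1 ≠ b.1 := fun hh => h (Subtype.ext hh)
    simp [matD, matE, Lam, Matrix.diagonal_apply_ne _ h, h', h]

lemma matN_ne_imp (a b : Vb G S) (h : matN G S a b ≠ 0) : r' G S a.1 b.1 := by
  have ha := Finset.mem_sdiff.1 a.2
  have hb := Finset.mem_sdiff.1 b.2
  by_cases hv : a.1 = b.1
  · exact absurd (by simp [matN, hv, Subtype.ext hv]) h
  · refine ⟨ha.1, hb.1, ha.2, hb.2, hv, ?_⟩
    intro hw
    exact h (by simp [matN, hv, hw])

lemma matN_pow_ne (hcyc : ∀ v, ¬ Relation.TransGen (r' G S) v v) :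
    ∀ (k : ℕ) (a c : Vb G S), (matN G S ^ k) a c ≠ 0 → bval G S a.1 + k ≤ bval G S c.1 := by
  intro k
  induction k with
  | zero =>
    intro a c h
    rw [pow_zero] at h
    by_cases hac : a = c
    · subst hac; simp
    · exact absurd (Matrix.one_apply_ne hac) h
  | succ k ih =>
    intro a c h
    rw [pow_succ, Matrix.mul_apply] at h
    obtain ⟨b, -, hb⟩ := Finset.exists_ne_zero_of_sum_ne_zero h
    have h1 : (matN G S ^ k) a b ≠ 0 := fun hh => hb (by simp [hh])
    have h2 : matN G S b c ≠ 0 := fun hh => hb (by simp [hh])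
    have := bval_lt hcyc (matN_ne_imp b c h2)
    have := ih a b h1
    omega

lemma matN_pow_card (hcyc : ∀ v, ¬ Relation.TransGen (r' G S) v v) :
    matN G S ^ (G.verts \ S).card = 0 := by
  ext a c
  by_contra h
  have h1 := matN_pow_ne hcyc _ a c (by simpa using h)
  have h2 := bval_le (G := G) (S := S) c.1
  have h3 := one_le_bval (G := G) (S := S) a.2
  omega

variable (G S) in
def geo : Matrix (Vb G S) (Vb G S) W := ∑ k ∈ Finset.range (G.verts \ S).card, matN G S ^ k

variable (G S) in
def Dinv : Matrix (Vb G S) (Vb G S) W := -(geo G S * Lami G S)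

lemma matD_mul_Dinv (hS : IsStructuralSet G S) : matD G S * Dinv G S = 1 := by
  have hgeo : (1 - matN G S) * geo G S = 1 := by
    have h1 := mul_geom_sum (matN G S) (G.verts \ S).card
    have h2 : (1 - matN G S) * geo G S = -((matN G S - 1) * geo G S) := by
      rw [← neg_mul, neg_sub]
    rw [h2, geo, h1, matN_pow_card hS.2.2.1, zero_sub, neg_neg]
  calc matD G S * Dinv G S
      = (Lam G S - matE G S) * (geo G S * Lami G S) := by
        rw [matD_eq, Dinv, mul_neg, ← neg_mul, neg_sub]
    _ = (Lam G S * ((1 - matN G S) * geo G S)) * Lami G S := by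
        rw [← Lam_mul_N hS]
        noncomm_ring
    _ = 1 := by rw [hgeo, mul_one, Lam_mul_Lami hS]

end IsoRedProof

namespace IsoRedProof

variable {V : Type*} [Fintype V] [DecidableEq V] {G : WDigraph V} {S : Finset V}

open Matrix Finset

lemma matD_blockTriangular (hcyc : ∀ v, ¬ Relation.TransGen (r' G S) v v) :
    Matrix.BlockTriangular (matD G S) (fun v : Vb G S => bval G S v.1) := by
  intro i j hij
  have hij' : bval G S j.1 < bval G S i.1 := hij
  by_cases h : i.1 = j.1
  · rw [h] at hij'; exact absurd hij' (lt_irrefl _)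
  · show G.w i.1 j.1 - ite _ _ _ = 0
    rw [if_neg h, sub_zero]
    by_contra hw
    have hi := Finset.mem_sdiff.1 i.2
    have hj := Finset.mem_sdiff.1 j.2
    have := bval_lt hcyc ⟨hi.1, hj.1, hi.2, hj.2, h, hw⟩
    omega

lemma det_matD (hcyc : ∀ v, ¬ Relation.TransGen (r' G S) v v) :
    (matD G S).det = ∏ v : Vb G S, (G.w v.1 v.1 - RatFunc.X) := by
  rw [(matD_blockTriangular hcyc).det]
  have hblock : ∀ a : ℕ, ((matD G S).toSquareBlock (fun v : Vb G S => bval G S v.1) a).det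
      = ∏ i : {i : Vb G S // bval G S i.1 = a}, (G.w i.1.1 i.1.1 - RatFunc.X) := by
    intro a
    have : (matD G S).toSquareBlock (fun v : Vb G S => bval G S v.1) a
        = Matrix.diagonal (fun i : {i : Vb G S // bval G S i.1 = a} =>
            G.w i.1.1 i.1.1 - RatFunc.X) := by
      ext i j
      by_cases h : i = j
      · subst h
        simp only [Matrix.toSquareBlock_def, Matrix.diagonal_apply_eq]
        show G.w i.1.1 i.1.1 - ite _ _ _ = _
        rw [if_pos rfl]
      · rw [Matrix.diagonal_apply_ne _ h]
        have hne : i.1 ≠ j.1 := fun hh => h (Subtype.ext hh)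
        have hval : i.1.1 ≠ j.1.1 := fun hh => hne (Subtype.ext hh)
        show G.w i.1.1 j.1.1 - ite _ _ _ = 0
        rw [if_neg hval, sub_zero]
        by_contra hw
        have hi := Finset.mem_sdiff.1 i.1.2
        have hj := Finset.mem_sdiff.1 j.1.2
        have hlt := bval_lt hcyc ⟨hi.1, hj.1, hi.2, hj.2, hval, hw⟩
        rw [i.2, j.2] at hlt
        exact absurd hlt (lt_irrefl _)
    rw [this, Matrix.det_diagonal]
  calc ∏ a ∈ Finset.univ.image (fun v : Vb G S => bval G S v.1),
        ((matD G S).toSquareBlock (fun v : Vb G S => bval G S v.1) a).det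
      = ∏ a ∈ Finset.univ.image (fun v : Vb G S => bval G S v.1),
          ∏ i ∈ Finset.univ.filter (fun i : Vb G S => bval G S i.1 = a),
            (G.w i.1 i.1 - RatFunc.X) := by
        refine Finset.prod_congr rfl fun a _ => ?_
        rw [hblock a]
        rw [← Finset.prod_subtype (Finset.univ.filter (fun i : Vb G S => bval G S i.1 = a))
          (fun x => by simp) (fun i : Vb G S => G.w i.1 i.1 - RatFunc.X)]
    _ = ∏ v : Vb G S, (G.w v.1 v.1 - RatFunc.X) := by
        exact Finset.prod_fiberwise_of_maps_to (fun i _ => Finset.mem_image_of_mem _ (Finset.mem_univ i)) _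

variable (G S) in
/-- The splitting of the vertex set of `G` along the structural set `S`. -/
def vsplit (hSsub : S ⊆ G.verts) : Vs (V := V) S ⊕ Vb G S ≃ {x : V // x ∈ G.verts} where
  toFun x := Sum.elim (fun i => ⟨i.1, hSsub i.2⟩) (fun v => ⟨v.1, (Finset.mem_sdiff.1 v.2).1⟩) x
  invFun u := if h : u.1 ∈ S then Sum.inl ⟨u.1, h⟩ else
    Sum.inr ⟨u.1, Finset.mem_sdiff.2 ⟨u.2, h⟩⟩
  left_inv x := by
    rcases x with i | v
    · simp
    · have := (Finset.mem_sdiff.1 v.2).2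
      simp [this]
  right_inv u := by
    by_cases h : u.1 ∈ S <;> simp [h]

lemma charDet_eq_blocks (hSsub : S ⊆ G.verts) :
    G.charDet = (Matrix.fromBlocks (matA G S) (matB G S) (matC G S) (matD G S)).det := by
  rw [WDigraph.charDet, ← Matrix.det_submatrix_equiv_self (vsplit G S hSsub)]
  congr 1
  ext x y
  rcases x with i | i <;> rcases y with j | j
  · have h1 : (vsplit G S hSsub (Sum.inl i) = vsplit G S hSsub (Sum.inl j)) ↔ i.1 = j.1 := by
      rw [Equiv.apply_eq_iff_eq]
      constructor
      · intro h
        have := congrArg (Sum.elim (fun a : Vs (V := V) S => a.1) (fun a : Vb G S => a.1)) h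
        simpa using this
      · intro h; exact congrArg Sum.inl (Subtype.ext h)
    show G.w i.1 j.1 - (if (vsplit G S hSsub (Sum.inl i)) = (vsplit G S hSsub (Sum.inl j))
      then RatFunc.X else (0 : W)) = G.w i.1 j.1 - (if i.1 = j.1 then RatFunc.X else 0)
    simp only [h1]
  · have h1 : ¬ (vsplit G S hSsub (Sum.inl i) = vsplit G S hSsub (Sum.inr j)) := by
      rw [Equiv.apply_eq_iff_eq]; simp
    show G.w i.1 j.1 - (if (vsplit G S hSsub (Sum.inl i)) = (vsplit G S hSsub (Sum.inr j))
      then RatFunc.X else (0 : W)) = G.w i.1 j.1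
    rw [if_neg h1, sub_zero]
  · have h1 : ¬ (vsplit G S hSsub (Sum.inr i) = vsplit G S hSsub (Sum.inl j)) := by
      rw [Equiv.apply_eq_iff_eq]; simp
    show G.w i.1 j.1 - (if (vsplit G S hSsub (Sum.inr i)) = (vsplit G S hSsub (Sum.inl j))
      then RatFunc.X else (0 : W)) = G.w i.1 j.1
    rw [if_neg h1, sub_zero]
  · have h1 : (vsplit G S hSsub (Sum.inr i) = vsplit G S hSsub (Sum.inr j)) ↔ i.1 = j.1 := by
      rw [Equiv.apply_eq_iff_eq]
      constructor
      · intro h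
        have := congrArg (Sum.elim (fun a : Vs (V := V) S => a.1) (fun a : Vb G S => a.1)) h
        simpa using this
      · intro h; exact congrArg Sum.inr (Subtype.ext h)
    show G.w i.1 j.1 - (if (vsplit G S hSsub (Sum.inr i)) = (vsplit G S hSsub (Sum.inr j))
      then RatFunc.X else (0 : W)) = G.w i.1 j.1 - (if i.1 = j.1 then RatFunc.X else 0)
    simp only [h1]

lemma charDet_factor (hS : IsStructuralSet G S) :
    G.charDet = (matD G S).det *
      (matA G S - matB G S * Dinv G S * matC G S).det := by
  have hinv : Invertible (matD G S) :=
    invertibleOfRightInverse _ _ (matD_mul_Dinv hS)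
  rw [charDet_eq_blocks hS.2.1, Matrix.det_fromBlocks₂₂,
    invOf_eq_right_inv (matD_mul_Dinv hS)]

end IsoRedProof

namespace IsoRedProof

variable {V : Type*} [Fintype V] [DecidableEq V]

open Matrix Finset

/-- Product along a walk in the complement of `S`, ending with a step to `j`. -/
def walkP (G : WDigraph V) (S : Finset V) (j : V) : Vb G S → List (Vb G S) → W
  | a, [] => (lamf G S a)⁻¹ * G.w a.1 j
  | a, b :: l => matN G S a b * walkP G S j b l

variable {G : WDigraph V} {S : Finset V}

lemma psum_eq (j : Vs (V := V) S) (k : ℕ) (a : Vb G S) :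
    (matN G S ^ k * (Lami G S * matC G S)) a j
      = ∑ c : Fin k → Vb G S, walkP G S j.1 a (List.ofFn c) := by
  induction k generalizing a with
  | zero =>
    rw [pow_zero, Matrix.one_mul]
    have : ∀ c : Fin 0 → Vb G S, List.ofFn c = [] := fun c => rfl
    have huniq : ∀ c : Fin 0 → Vb G S, c = (fun i => i.elim0) :=
      fun c => funext fun t => t.elim0
    rw [Fintype.sum_eq_single (fun i => i.elim0) (fun c hc => absurd (huniq c) hc)]
    simp only [this, walkP, Lami, Matrix.diagonal_mul, matC, Matrix.of_apply]
  | succ k ih =>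
    rw [pow_succ', Matrix.mul_assoc, Matrix.mul_apply]
    have hsplit : ∑ c : Fin (k+1) → Vb G S, walkP G S j.1 a (List.ofFn c)
        = ∑ p : Vb G S × (Fin k → Vb G S), walkP G S j.1 a (List.ofFn (Fin.cons p.1 p.2)) := by
      exact Fintype.sum_equiv (Fin.consEquiv (fun _ => Vb G S)).symm _ _ (fun c => by
        congr 1; exact (Fin.cons_self_tail c).symm ▸ rfl)
    rw [hsplit, Fintype.sum_prod_type]
    refine Finset.sum_congr rfl fun b _ => ?_
    rw [ih b, Finset.mul_sum]
    refine Finset.sum_congr rfl fun c _ => ?_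
    have : List.ofFn (Fin.cons b c : Fin (k+1) → Vb G S) = b :: List.ofFn c := by
      rw [List.ofFn_succ]
      simp
    rw [this, walkP]

lemma walkP_branchProd (hS : IsStructuralSet G S) (j : V) :
    ∀ (l : List (Vb G S)) (a : Vb G S),
      List.Chain' (fun x y : Vb G S => x.1 ≠ y.1) (a :: l) →
      branchProd G.w ((a.1 :: l.map (fun v => v.1)) ++ [j])
        = (RatFunc.X - G.w a.1 a.1) * walkP G S j a l := by
  intro l
  induction l with
  | nil =>
    intro a _
    show branchProd G.w [a.1, j] = _
    rw [branchProd, walkP,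
      show (RatFunc.X - G.w a.1 a.1) = lamf G S a from rfl, ← mul_assoc,
      mul_inv_cancel₀ (lamf_ne hS a), one_mul]
  | cons b l ih =>
    intro a hchain
    have hab : a.1 ≠ b.1 := (List.isChain_cons_cons.1 hchain).1
    have htail := (List.isChain_cons_cons.1 hchain).2
    show branchProd G.w (a.1 :: b.1 :: (l.map (fun v => v.1) ++ [j])) = _
    have hb : branchProd G.w (a.1 :: b.1 :: (l.map (fun v => v.1) ++ [j]))
        = G.w a.1 b.1 * branchProd G.w ((b.1 :: l.map (fun v => v.1)) ++ [j])
          / (RatFunc.X - G.w b.1 b.1) := by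
      cases l with
      | nil => rfl
      | cons c l' => rfl
    have hla : RatFunc.X - G.w a.1 a.1 ≠ 0 := lamf_ne hS a
    have hlb' : RatFunc.X - G.w b.1 b.1 ≠ 0 := lamf_ne hS b
    have hN : matN G S a b = (RatFunc.X - G.w a.1 a.1)⁻¹ * G.w a.1 b.1 := by
      simp [matN, lamf, hab, show a ≠ b from fun h => hab (congrArg Subtype.val h)]
    rw [hb, ih b htail, walkP, hN]
    field_simp [hla, hlb']

lemma walkP_ne_chain (j : V) :
    ∀ (l : List (Vb G S)) (a : Vb G S), walkP G S j a l ≠ 0 →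
      List.Chain' (fun x y : Vb G S => r' G S x.1 y.1) (a :: l) ∧
        G.w ((a :: l).getLast (List.cons_ne_nil a l)).1 j ≠ 0 := by
  intro l
  induction l with
  | nil =>
    intro a h
    refine ⟨List.isChain_singleton a, fun hw => h ?_⟩
    have heq : ([a].getLast (List.cons_ne_nil a [])) = a := rfl
    rw [heq] at hw
    rw [walkP, hw, mul_zero]
  | cons b l ih =>
    intro a h
    rw [walkP] at h
    have h1 : matN G S a b ≠ 0 := fun hh => h (by rw [hh, zero_mul])
    have h2 : walkP G S j b l ≠ 0 := fun hh => h (by rw [hh, mul_zero])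
    obtain ⟨hc, hlast⟩ := ih b h2
    refine ⟨List.isChain_cons_cons.2 ⟨matN_ne_imp a b h1, hc⟩, ?_⟩
    rwa [List.getLast_cons (List.cons_ne_nil b l)]

/-- In a chain, every later element is reachable from the head. -/
lemma chain'_transGen {R : V → V → Prop} :
    ∀ (l : List V) (a : V), List.Chain' R (a :: l) →
      ∀ b ∈ l, Relation.TransGen R a b := by
  intro l
  induction l with
  | nil => intro a _ b hb; exact absurd hb List.not_mem_nil
  | cons c l ih =>
    intro a hchain b hb
    have h1 : R a c := (List.isChain_cons_cons.1 hchain).1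
    have h2 := (List.isChain_cons_cons.1 hchain).2
    rcases List.mem_cons.1 hb with rfl | hb'
    · exact Relation.TransGen.single h1
    · exact Relation.TransGen.head h1 (ih c h2 b hb')

lemma chain'_nodup (hcyc : ∀ v, ¬ Relation.TransGen (r' G S) v v) :
    ∀ (L : List V), List.Chain' (r' G S) L → L.Nodup := by
  intro L
  induction L with
  | nil => exact fun _ => List.nodup_nil
  | cons x L ih =>
    intro hchain
    refine List.nodup_cons.2 ⟨fun hx => ?_, ih hchain.tail⟩
    exact hcyc x (chain'_transGen L x hchain x hx)

end IsoRedProof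

namespace IsoRedProof

variable {V : Type*} [Fintype V] [DecidableEq V]

open Matrix Finset

variable (G : WDigraph V) (S : Finset V)

/-- The list of a candidate branch from `i` to `j` with interior `c`. -/
def phiL (i j : V) (m : ℕ) (c : Fin m → Vb G S) : List V :=
  i :: ((List.ofFn c).map (fun v => v.1) ++ [j])

variable {G S}

lemma phiL_length (i j : V) (m : ℕ) (c : Fin m → Vb G S) :
    (phiL G S i j m c).length = m + 2 := by
  simp [phiL]

lemma phiL_injective (i j : V) (m : ℕ) : Function.Injective (phiL G S i j m) := by
  intro c c' h
  have h1 : (List.ofFn c).map (fun v : Vb G S => v.1) ++ [j]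
      = (List.ofFn c').map (fun v : Vb G S => v.1) ++ [j] := by
    exact List.tail_eq_of_cons_eq h
  have h2 : (List.ofFn c).map (fun v : Vb G S => v.1)
      = (List.ofFn c').map (fun v : Vb G S => v.1) :=
    List.append_left_injective [j] h1
  have h3 : List.ofFn c = List.ofFn c' :=
    List.map_injective_iff.2 Subtype.val_injective h2
  funext t
  have := List.ofFn_injective h3
  rw [this]

lemma branch_exists_tuple {i j : V} {β : List V} (hβ : IsBranch G S i j β)
    (m : ℕ) (hlen : β.length = m + 2) : ∃ c : Fin m → Vb G S, β = phiL G S i j m c := by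
  obtain ⟨hi, hj, int, heq, hmem, hnodup, hjne, hchain⟩ := hβ
  have hm : int.length = m := by
    have := congrArg List.length heq
    simp at this
    omega
  refine ⟨fun t => ⟨int.get (Fin.cast hm.symm t), ?_⟩, ?_⟩
  · have hmm : int.get (Fin.cast hm.symm t) ∈ int := List.get_mem _ _
    exact Finset.mem_sdiff.2 (hmem _ hmm)
  · rw [heq, phiL]
    congr 1
    congr 1
    apply List.ext_get
    · simp [hm]
    · intro n h1 h2
      simp

lemma branchProd_cons_cons (w : V → V → RatFunc ℂ) (x y : V) (L : List V) (hL : L ≠ []) :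
    branchProd w (x :: y :: L) = w x y * branchProd w (y :: L) / (RatFunc.X - w y y) := by
  cases L with
  | nil => exact absurd rfl hL
  | cons z L' => rfl

lemma term_eq_ite (hS : IsStructuralSet G S) (i j : Vs (V := V) S) (k : ℕ)
    (c : Fin (k+1) → Vb G S) :
    G.w i.1 (c 0).1 * walkP G S j.1 (c 0) (List.ofFn (Fin.tail c))
      = if IsBranch G S i.1 j.1 (phiL G S i.1 j.1 (k+1) c)
          then branchProd G.w (phiL G S i.1 j.1 (k+1) c) else 0 := by
  have hofn : List.ofFn c = c 0 :: List.ofFn (Fin.tail c) := List.ofFn_succ (f := c)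
  have hphi : phiL G S i.1 j.1 (k+1) c
      = i.1 :: (c 0).1 :: ((List.ofFn (Fin.tail c)).map (fun v : Vb G S => v.1) ++ [j.1]) := by
    rw [phiL, hofn]
    simp
  split_ifs with hbr
  · -- branch case
    obtain ⟨-, -, int, heq, -, hnodup, -, -⟩ := hbr
    have hint : int = (List.ofFn c).map (fun v : Vb G S => v.1) := by
      have h1 := heq.symm.trans (rfl : phiL G S i.1 j.1 (k+1) c
        = i.1 :: ((List.ofFn c).map (fun v : Vb G S => v.1) ++ [j.1]))
      have h2 := List.tail_eq_of_cons_eq h1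
      exact (List.append_left_injective [j.1] h2)
    have hnd : ((List.ofFn c).map (fun v : Vb G S => v.1)).Nodup := by
      rw [← hint]
      exact (List.nodup_cons.1 hnodup).2
    have hchain : List.Chain' (fun x y : Vb G S => x.1 ≠ y.1) (List.ofFn c) := by
      have := (List.pairwise_map.1 hnd)
      exact this.isChain
    rw [hofn] at hchain
    have := walkP_branchProd hS j.1 (List.ofFn (Fin.tail c)) (c 0) hchain
    rw [hphi]
    rw [branchProd_cons_cons G.w i.1 (c 0).1 _ (by simp)]
    rw [show ((c 0).1 :: ((List.ofFn (Fin.tail c)).map (fun v : Vb G S => v.1) ++ [j.1]))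
      = (((c 0).1 :: (List.ofFn (Fin.tail c)).map (fun v : Vb G S => v.1)) ++ [j.1]) from rfl]
    rw [this]
    have hla : RatFunc.X - G.w (c 0).1 (c 0).1 ≠ 0 := lamf_ne hS (c 0)
    field_simp
  · -- non-branch case : show the term is 0
    by_contra hne
    apply hbr
    have hw1 : G.w i.1 (c 0).1 ≠ 0 := fun hh => hne (by rw [hh, zero_mul])
    have hw2 : walkP G S j.1 (c 0) (List.ofFn (Fin.tail c)) ≠ 0 :=
      fun hh => hne (by rw [hh, mul_zero])
    obtain ⟨hchain, hlast⟩ := walkP_ne_chain j.1 (List.ofFn (Fin.tail c)) (c 0) hw2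
    rw [← hofn] at hchain
    set L := (List.ofFn c).map (fun v : Vb G S => v.1) with hL
    have hchainV : List.Chain' (r' G S) L := by
      rw [hL, List.Chain', List.isChain_map]
      exact hchain
    have hnodupL : L.Nodup := chain'_nodup hS.2.2.1 L hchainV
    have hmemL : ∀ x ∈ L, x ∈ G.verts ∧ x ∉ S := by
      intro x hx
      rcases List.mem_map.1 hx with ⟨b, -, rfl⟩
      exact ⟨(Finset.mem_sdiff.1 b.2).1, (Finset.mem_sdiff.1 b.2).2⟩
    have hlast? : (List.ofFn c).getLast?
        = some ((c 0 :: List.ofFn (Fin.tail c)).getLast (List.cons_ne_nil _ _)) := by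
      rw [hofn]
      exact List.getLast?_eq_some_getLast _
    have hLlast? : L.getLast?
        = some (((c 0 :: List.ofFn (Fin.tail c)).getLast (List.cons_ne_nil _ _)).1) := by
      rw [hL, List.getLast?_map, hlast?]
      rfl
    refine ⟨i.2, j.2, L, rfl, hmemL, ?_, ?_, ?_⟩
    · refine List.nodup_cons.2 ⟨fun hx => ?_, hnodupL⟩
      exact (hmemL i.1 hx).2 i.2
    · intro hx
      exact (hmemL j.1 hx).2 j.2
    · -- chain' of nonzero weights on i :: (L ++ [j])
      show List.Chain' (fun a b => G.w a b ≠ 0) (i.1 :: (L ++ [j.1]))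
      have hLcons : L = (c 0).1 :: (List.ofFn (Fin.tail c)).map (fun v : Vb G S => v.1) := by
        rw [hL, hofn]; simp
      have happ : List.Chain' (fun a b => G.w a b ≠ 0) (L ++ [j.1]) := by
        apply List.IsChain.append
        · exact hchainV.imp (fun a b h => h.2.2.2.2.2)
        · exact List.isChain_singleton j.1
        · intro x hx y hy
          rw [List.head?_cons, Option.mem_some_iff] at hy
          rw [hLlast?, Option.mem_some_iff] at hx
          subst hy
          rw [← hx]
          exact hlast
      refine happ.cons ?_
      intro y hy
      have hhead : (L ++ [j.1]).head? = some (c 0).1 := by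
        rw [hLcons]; rfl
      rw [hhead, Option.mem_some_iff] at hy
      subst hy
      exact hw1

end IsoRedProof

namespace IsoRedProof

variable {V : Type*} [Fintype V] [DecidableEq V]

open Matrix Finset

variable {G : WDigraph V} {S : Finset V}

lemma T_finite (i j : V) (m : ℕ) :
    {β : List V | IsBranch G S i j β ∧ β.length = m + 2}.Finite := by
  apply Set.Finite.subset (Set.finite_range (phiL G S i j m))
  rintro β ⟨hβ, hlen⟩
  obtain ⟨c, rfl⟩ := branch_exists_tuple hβ m hlen
  exact Set.mem_range_self c

lemma sum_term_eq (hS : IsStructuralSet G S) (i j : Vs (V := V) S) (k : ℕ) :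
    (matB G S * (matN G S ^ k * (Lami G S * matC G S))) i j
      = ∑ᶠ β ∈ {β : List V | IsBranch G S i.1 j.1 β ∧ β.length = k + 3}, branchProd G.w β := by
  rw [Matrix.mul_apply]
  have step1 : ∀ b : Vb G S, matB G S i b * (matN G S ^ k * (Lami G S * matC G S)) b j
      = ∑ c : Fin k → Vb G S, G.w i.1 b.1 * walkP G S j.1 b (List.ofFn c) := by
    intro b
    rw [psum_eq, Finset.mul_sum]
    rfl
  simp_rw [step1]
  have step2 : ∑ b : Vb G S, ∑ c : Fin k → Vb G S, G.w i.1 b.1 * walkP G S j.1 b (List.ofFn c)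
      = ∑ c : Fin (k+1) → Vb G S, G.w i.1 (c 0).1 * walkP G S j.1 (c 0) (List.ofFn (Fin.tail c)) := by
    have e1 : ∑ c : Fin (k+1) → Vb G S,
        G.w i.1 (c 0).1 * walkP G S j.1 (c 0) (List.ofFn (Fin.tail c))
        = ∑ p : Vb G S × (Fin k → Vb G S), G.w i.1 p.1.1 * walkP G S j.1 p.1 (List.ofFn p.2) :=
      Fintype.sum_equiv (Fin.consEquiv (fun _ => Vb G S)).symm _ _ (fun c => by
        simp only [Fin.consEquiv_symm_apply])
    rw [e1, Fintype.sum_prod_type]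
  rw [step2]
  have step3 : ∑ c : Fin (k+1) → Vb G S,
      G.w i.1 (c 0).1 * walkP G S j.1 (c 0) (List.ofFn (Fin.tail c))
      = ∑ c ∈ Finset.univ.filter
          (fun c : Fin (k+1) → Vb G S => IsBranch G S i.1 j.1 (phiL G S i.1 j.1 (k+1) c)),
          branchProd G.w (phiL G S i.1 j.1 (k+1) c) := by
    rw [Finset.sum_filter]
    exact Finset.sum_congr rfl fun c _ => term_eq_ite hS i j k c
  rw [step3]
  have step4 : ∑ c ∈ Finset.univ.filter
      (fun c : Fin (k+1) → Vb G S => IsBranch G S i.1 j.1 (phiL G S i.1 j.1 (k+1) c)),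
      branchProd G.w (phiL G S i.1 j.1 (k+1) c)
      = ∑ᶠ c ∈ {c : Fin (k+1) → Vb G S | IsBranch G S i.1 j.1 (phiL G S i.1 j.1 (k+1) c)},
          branchProd G.w (phiL G S i.1 j.1 (k+1) c) := by
    rw [← finsum_mem_coe_finset]
    congr 1
    ext c
    simp
  rw [step4, ← finsum_mem_image (f := branchProd G.w)
    ((phiL_injective i.1 j.1 (k+1)).injOn)]
  have hseteq : phiL G S i.1 j.1 (k+1) ''
      {c : Fin (k+1) → Vb G S | IsBranch G S i.1 j.1 (phiL G S i.1 j.1 (k+1) c)}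
      = {β : List V | IsBranch G S i.1 j.1 β ∧ β.length = k + 3} := by
    ext β
    constructor
    · rintro ⟨c, hc, rfl⟩
      exact ⟨hc, by rw [phiL_length]⟩
    · rintro ⟨hβ, hlen⟩
      obtain ⟨c, rfl⟩ := branch_exists_tuple hβ (k+1) hlen
      exact ⟨c, by rwa [Set.mem_setOf_eq], rfl⟩
  rw [hseteq]

lemma sum_branch_len2 (i j : Vs (V := V) S) :
    ∑ᶠ β ∈ {β : List V | IsBranch G S i.1 j.1 β ∧ β.length = 0 + 2}, branchProd G.w β
      = G.w i.1 j.1 := by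
  by_cases hw : G.w i.1 j.1 = 0
  · have : {β : List V | IsBranch G S i.1 j.1 β ∧ β.length = 0 + 2} = ∅ := by
      ext β
      simp only [Set.mem_setOf_eq, Set.mem_empty_iff_false, iff_false]
      rintro ⟨⟨-, -, int, heq, -, -, -, hchain⟩, hlen⟩
      have hint : int = [] := by
        rw [heq] at hlen
        simpa using hlen
      rw [hint] at heq
      rw [heq] at hchain
      exact (List.isChain_cons_cons.1 hchain).1 hw
    rw [this, finsum_mem_empty, hw]
  · have : {β : List V | IsBranch G S i.1 j.1 β ∧ β.length = 0 + 2} = {[i.1, j.1]} := by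
      ext β
      simp only [Set.mem_setOf_eq, Set.mem_singleton_iff]
      constructor
      · rintro ⟨⟨-, -, int, heq, -, -, -, -⟩, hlen⟩
        have hint : int = [] := by
          rw [heq] at hlen
          simpa using hlen
        rw [hint] at heq
        exact heq
      · rintro rfl
        refine ⟨⟨i.2, j.2, [], rfl, by simp, by simp, by simp, ?_⟩, rfl⟩
        exact List.isChain_cons_cons.2 ⟨hw, List.isChain_singleton _⟩
    rw [this, finsum_mem_singleton]
    rfl

lemma branch_set_eq_iUnion (i j : Vs (V := V) S) :
    {β : List V | IsBranch G S i.1 j.1 β}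
      = ⋃ m : Fin ((G.verts \ S).card + 1),
          {β : List V | IsBranch G S i.1 j.1 β ∧ β.length = m.1 + 2} := by
  ext β
  simp only [Set.mem_setOf_eq, Set.mem_iUnion]
  constructor
  · intro hβ
    have hβ' := hβ
    obtain ⟨-, -, int, heq, hmem, hnodup, -, -⟩ := hβ'
    have hnd : int.Nodup := (List.nodup_cons.1 hnodup).2
    have hsub : int.toFinset ⊆ G.verts \ S := by
      intro x hx
      rw [List.mem_toFinset] at hx
      exact Finset.mem_sdiff.2 (hmem x hx)
    have hlen : int.length ≤ (G.verts \ S).card := by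
      rw [← List.toFinset_card_of_nodup hnd]
      exact Finset.card_le_card hsub
    refine ⟨⟨int.length, by omega⟩, hβ, ?_⟩
    rw [heq]
    simp
  · rintro ⟨m, hβ, -⟩
    exact hβ

lemma reduce_w_eq (hS : IsStructuralSet G S) (i j : Vs (V := V) S) :
    (G.reduce S).w i.1 j.1
      = G.w i.1 j.1 + ∑ k ∈ Finset.range (G.verts \ S).card,
          (matB G S * (matN G S ^ k * (Lami G S * matC G S))) i j := by
  show ∑ᶠ β ∈ {β : List V | IsBranch G S i.1 j.1 β}, branchProd G.w β = _
  rw [branch_set_eq_iUnion i j]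
  have hdisj : Pairwise (Function.onFun Disjoint (fun m : Fin ((G.verts \ S).card + 1) =>
      {β : List V | IsBranch G S i.1 j.1 β ∧ β.length = m.1 + 2})) := by
    intro a b hab
    simp only [Function.onFun, Set.disjoint_left]
    rintro β ⟨-, h1⟩ ⟨-, h2⟩
    apply hab
    have : a.1 = b.1 := by omega
    exact Fin.ext this
  have hfin : ∀ m : Fin ((G.verts \ S).card + 1),
      {β : List V | IsBranch G S i.1 j.1 β ∧ β.length = m.1 + 2}.Finite :=
    fun m => T_finite i.1 j.1 m.1
  rw [finsum_mem_iUnion hdisj hfin]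
  rw [finsum_eq_sum_of_fintype]
  rw [Fin.sum_univ_succ]
  congr 1
  · exact sum_branch_len2 i j
  · rw [← Fin.sum_univ_eq_sum_range
      (fun k => (matB G S * (matN G S ^ k * (Lami G S * matC G S))) i j)]
    refine Finset.sum_congr rfl fun k _ => ?_
    rw [sum_term_eq hS i j k.1]
    congr 1

lemma schur_entry (hS : IsStructuralSet G S) (i j : Vs (V := V) S) :
    (matA G S - matB G S * Dinv G S * matC G S) i j
      = (G.reduce S).w i.1 j.1 - (if i.1 = j.1 then RatFunc.X else 0) := by
  have hmat : matB G S * Dinv G S * matC G S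
      = -(∑ k ∈ Finset.range (G.verts \ S).card,
          matB G S * (matN G S ^ k * (Lami G S * matC G S))) := by
    rw [Dinv, geo]
    simp only [Matrix.mul_neg, Matrix.neg_mul, Finset.sum_mul, Matrix.mul_sum,
      Matrix.mul_assoc]
    congr 1
    rw [Matrix.sum_mul]
    exact Finset.sum_congr rfl fun k _ => by rw [Matrix.mul_assoc, Matrix.mul_assoc]
  rw [Matrix.sub_apply, hmat, Matrix.neg_apply, reduce_w_eq hS i j]
  rw [show matA G S i j = G.w i.1 j.1 - (if i.1 = j.1 then RatFunc.X else 0) from rfl]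
  rw [Matrix.sum_apply]
  ring

lemma reduce_charDet (hS : IsStructuralSet G S) :
    (G.reduce S).charDet = (matA G S - matB G S * Dinv G S * matC G S).det := by
  rw [WDigraph.charDet]
  congr 1
  ext i j
  rw [Matrix.of_apply, schur_entry hS i j]
  congr 2
  exact propext Subtype.ext_iff

end IsoRedProof

namespace IsoRedProof

open Polynomial

/-- `h` has neither a numerator nor a denominator root at `z`. -/
def GoodAt (z : ℂ) (h : RatFunc ℂ) : Prop :=
  h.num.eval z ≠ 0 ∧ h.denom.eval z ≠ 0

lemma not_both_eval_zero (h : RatFunc ℂ) (z : ℂ) :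
    ¬(h.num.eval z = 0 ∧ h.denom.eval z = 0) := by
  rintro ⟨h1, h2⟩
  obtain ⟨a, b, hab⟩ := RatFunc.isCoprime_num_denom h
  have := congrArg (Polynomial.eval z) hab
  simp [h1, h2] at this

lemma goodAt_one (z : ℂ) : GoodAt z 1 := by
  constructor <;> simp [RatFunc.num_one, RatFunc.denom_one]

lemma goodAt_mul {z : ℂ} {a b : RatFunc ℂ} (ha : GoodAt z a) (hb : GoodAt z b) :
    GoodAt z (a * b) := by
  have key := congrArg (Polynomial.eval z) (RatFunc.num_denom_mul a b)
  simp only [Polynomial.eval_mul] at key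
  constructor
  · intro h0
    rw [h0, zero_mul] at key
    have : (a * b).denom.eval z = 0 := by
      rcases mul_eq_zero.1 key.symm with h | h
      · rcases mul_eq_zero.1 h with h' | h'
        · exact absurd h' ha.1
        · exact absurd h' hb.1
      · exact h
    exact not_both_eval_zero (a * b) z ⟨h0, this⟩
  · intro h0
    rw [h0, mul_zero] at key
    have : (a * b).num.eval z = 0 := by
      rcases mul_eq_zero.1 key with h | h
      · exact h
      · rcases mul_eq_zero.1 h with h' | h'
        · exact absurd h' ha.2
        · exact absurd h' hb.2
    exact not_both_eval_zero (a * b) z ⟨this, h0⟩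

lemma goodAt_neg {z : ℂ} {a : RatFunc ℂ} (ha : GoodAt z a) : GoodAt z (-a) := by
  have key := congrArg (Polynomial.eval z) (RatFunc.num_denom_neg a)
  simp only [Polynomial.eval_mul, Polynomial.eval_neg] at key
  constructor
  · intro h0
    rw [h0, zero_mul] at key
    have : (-a).denom.eval z = 0 := by
      rcases mul_eq_zero.1 key.symm with h | h
      · exact absurd (neg_eq_zero.1 h) ha.1
      · exact h
    exact not_both_eval_zero (-a) z ⟨h0, this⟩
  · intro h0
    rw [h0, mul_zero] at key
    have : (-a).num.eval z = 0 := by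
      rcases mul_eq_zero.1 key with h | h
      · exact h
      · exact absurd h ha.2
    exact not_both_eval_zero (-a) z ⟨this, h0⟩

lemma eval_ne_of_dvd {p q : Polynomial ℂ} (hdvd : p ∣ q) {z : ℂ} (hq : q.eval z ≠ 0) :
    p.eval z ≠ 0 := by
  obtain ⟨r, rfl⟩ := hdvd
  intro h0
  apply hq
  rw [Polynomial.eval_mul, h0, zero_mul]

lemma denom_neg_dvd (x : RatFunc ℂ) : (-x).denom ∣ x.denom := by
  rw [RatFunc.denom_dvd (RatFunc.denom_ne_zero x)]
  exact ⟨-x.num, by rw [map_neg, neg_div, RatFunc.num_div_denom]⟩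

lemma goodAt_sub_X {z : ℂ} {h : RatFunc ℂ}
    (hnum : (RatFunc.X - h).num.eval z ≠ 0) (hden : h.denom.eval z ≠ 0) :
    GoodAt z (h - RatFunc.X) := by
  have h1 : GoodAt z (RatFunc.X - h) := by
    refine ⟨hnum, ?_⟩
    have hdvd : (RatFunc.X - h).denom ∣ (RatFunc.X : RatFunc ℂ).denom * (-h).denom := by
      have := RatFunc.denom_add_dvd (RatFunc.X : RatFunc ℂ) (-h)
      rwa [← sub_eq_add_neg] at this
    have hX : (RatFunc.X : RatFunc ℂ).denom = 1 := by
      rw [← RatFunc.algebraMap_X, RatFunc.denom_algebraMap]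
    rw [hX, one_mul] at hdvd
    exact eval_ne_of_dvd (dvd_trans hdvd (denom_neg_dvd h)) hden
  have := goodAt_neg h1
  rwa [neg_sub] at this

lemma rootMultiplicity_num_mul {z : ℂ} {f g : RatFunc ℂ} (hg : GoodAt z g) :
    Polynomial.rootMultiplicity z (g * f).num = Polynomial.rootMultiplicity z f.num := by
  by_cases hf : f = 0
  · rw [hf, mul_zero]
  have hgne : g ≠ 0 := by
    intro h0
    apply hg.1
    rw [h0, RatFunc.num_zero, Polynomial.eval_zero]
  have hgf : g * f ≠ 0 := mul_ne_zero hgne hf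
  have key := congrArg (fun p => Polynomial.rootMultiplicity z p) (RatFunc.num_denom_mul g f)
  have hA : (g * f).num ≠ 0 := RatFunc.num_ne_zero hgf
  have hnf : f.num ≠ 0 := RatFunc.num_ne_zero hf
  have hng : g.num ≠ 0 := RatFunc.num_ne_zero hgne
  have hdf : f.denom ≠ 0 := RatFunc.denom_ne_zero f
  have hdg : g.denom ≠ 0 := RatFunc.denom_ne_zero g
  have hdgf : (g * f).denom ≠ 0 := RatFunc.denom_ne_zero (g * f)
  rw [Polynomial.rootMultiplicity_mul (mul_ne_zero hA (mul_ne_zero hdg hdf)),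
    Polynomial.rootMultiplicity_mul (mul_ne_zero hdg hdf),
    Polynomial.rootMultiplicity_mul (mul_ne_zero (mul_ne_zero hng hnf) hdgf),
    Polynomial.rootMultiplicity_mul (mul_ne_zero hng hnf)] at key
  have hrg : Polynomial.rootMultiplicity z g.num = 0 :=
    Polynomial.rootMultiplicity_eq_zero hg.1
  have hrdg : Polynomial.rootMultiplicity z g.denom = 0 :=
    Polynomial.rootMultiplicity_eq_zero hg.2
  rw [hrg, hrdg] at key
  -- key : rm A + (0 + rm df) = (0 + rm nf) + rm dgf
  have hc1 : Polynomial.rootMultiplicity z (g * f).num = 0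
      ∨ Polynomial.rootMultiplicity z (g * f).denom = 0 := by
    by_contra hcon
    push_neg at hcon
    have h1 : (g * f).num.eval z = 0 := by
      by_contra hh
      exact hcon.1 (Polynomial.rootMultiplicity_eq_zero hh)
    have h2 : (g * f).denom.eval z = 0 := by
      by_contra hh
      exact hcon.2 (Polynomial.rootMultiplicity_eq_zero hh)
    exact not_both_eval_zero (g * f) z ⟨h1, h2⟩
  have hc2 : Polynomial.rootMultiplicity z f.num = 0
      ∨ Polynomial.rootMultiplicity z f.denom = 0 := by
    by_contra hcon
    push_neg at hcon
    have h1 : f.num.eval z = 0 := by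
      by_contra hh
      exact hcon.1 (Polynomial.rootMultiplicity_eq_zero hh)
    have h2 : f.denom.eval z = 0 := by
      by_contra hh
      exact hcon.2 (Polynomial.rootMultiplicity_eq_zero hh)
    exact not_both_eval_zero f z ⟨h1, h2⟩
  rcases hc1 with h1 | h1 <;> rcases hc2 with h2 | h2 <;> omega

end IsoRedProof

open IsoRedProof

/-- **Theorem 1 (Isospectral graph reduction).** Let `G ∈ 𝔾` and `S ∈ st(G)`.
Then `σ(G)` and `σ(R_S(G))` differ at most by `N(G;S)`. -/
theorem spec_reduce_diff_at_most_NSet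
    (G : WDigraph V) (hG : G.Wf) (S : Finset V) (hS : IsStructuralSet G S) :
    SpecDiffAtMost G.spec (G.reduce S).spec (NSet G S) := by
  set g : RatFunc ℂ := ∏ v : Vb G S, (G.w v.1 v.1 - RatFunc.X) with hg
  have hfact : G.charDet = g * (G.reduce S).charDet := by
    rw [charDet_factor hS, det_matD hS.2.2.1, reduce_charDet hS]
  rw [SpecDiffAtMost, WDigraph.spec, WDigraph.spec]
  refine Multiset.ext.2 fun z => ?_
  rw [Multiset.count_filter, Multiset.count_filter]
  split_ifs with hz
  · rfl
  · -- z ∉ NSet G S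
    rw [Polynomial.count_roots, Polynomial.count_roots, hfact]
    apply rootMultiplicity_num_mul
    rw [hg]
    refine Finset.prod_induction _ (GoodAt z) (fun a b => goodAt_mul) (goodAt_one z)
      (fun v _ => ?_)
    have hv := Finset.mem_sdiff.1 v.2
    have hn : ¬ ((RatFunc.X - G.w v.1 v.1).num.eval z = 0 ∨ (G.w v.1 v.1).denom.eval z = 0) := by
      intro hcon
      exact hz ⟨v.1, hv.1, hv.2, hcon⟩
    push_neg at hn
    exact goodAt_sub_X hn.1 hn.2
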